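/- Residue of the resolvent at a simple zero of the Birman–Schwinger function: Let E be a complex Banach space, R : E → E a bounded linear operator, u0 ∈ E, Φ a continuous linear functional on E, α ∈ ℂ, and T := α • (u0⊗Φ) + R. Suppose λ0 ∈ ℂ is such that λ0•I - R is invertible with inverse Rλ0, that D(λ0) = 0 where D(λ) := 1 - α·Φ((λ•I - R)⁻¹ u0), and that D has nonzero derivative d := D'(λ0) ≠ 0 at λ0. Then, as λ → λ0 with λ ≠ λ0, the operators (λ - λ0) • (λ•I - T)⁻¹ converge in operator norm to the rank-one operator (α / d) • ((Rλ0 u0) ⊗ (Φ ∘ Rλ0)), where (Rλ0 u0) ⊗ (Φ ∘ Rλ0) is the map f ↦ Φ(Rλ0 f) • (Rλ0 u0). (In particular (λ•I - T)⁻¹ exists for all λ ≠ λ0 in some punctured neighborhood of λ0.) -/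

import Mathlib

open Topology Filter

private lemma sm_mul {E : Type*} [NormedAddCommGroup E] [NormedSpace ℂ E]
    (Φ : E →L[ℂ] ℂ) (u0 : E) (α c : ℂ) (a s : E →L[ℂ] E)
    (h1 : a * s = 1) (h2 : s * a = 1)
    (hc : c * (1 - α * Φ (s u0)) = α) :
    (a - α • Φ.smulRight u0) * (s + c • (Φ.comp s).smulRight (s u0)) = 1 ∧
    (s + c • (Φ.comp s).smulRight (s u0)) * (a - α • Φ.smulRight u0) = 1 := by
  have h1' : ∀ x, a (s x) = x := fun x => by
    have := congrArg (fun g : E →L[ℂ] E => g x) h1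
    simpa [ContinuousLinearMap.mul_apply] using this
  have h2' : ∀ x, s (a x) = x := fun x => by
    have := congrArg (fun g : E →L[ℂ] E => g x) h2
    simpa [ContinuousLinearMap.mul_apply] using this
  constructor <;> ext f <;>
    simp only [ContinuousLinearMap.mul_apply, ContinuousLinearMap.add_apply,
      ContinuousLinearMap.sub_apply, ContinuousLinearMap.smul_apply,
      ContinuousLinearMap.smulRight_apply, ContinuousLinearMap.coe_comp',
      Function.comp_apply, ContinuousLinearMap.one_apply, map_add, map_smul,
      map_sub, h1', h2', smul_eq_mul]
  · have e1 : u0 - α • Φ (s u0) • u0 = (1 - α * Φ (s u0)) • u0 := by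
      rw [sub_smul, one_smul, mul_smul]
    rw [e1, smul_smul, smul_smul, smul_smul]
    have e2 : c * Φ (s f) * (1 - α * Φ (s u0)) = α * Φ (s f) := by
      linear_combination Φ (s f) * hc
    rw [e2]
    abel
  · have e1 : s u0 + c • Φ (s u0) • s u0 = (1 + c * Φ (s u0)) • s u0 := by
      rw [add_smul, one_smul, mul_smul]
    rw [e1, smul_smul, smul_smul, smul_smul]
    have e2 : α * Φ f * (1 + c * Φ (s u0)) = c * Φ f := by
      linear_combination (-(Φ f)) * hc
    rw [e2]
    abel

theorem residue_at_simple_zero_birman_schwinger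
    {E : Type*} [NormedAddCommGroup E] [NormedSpace ℂ E] [CompleteSpace E]
    (R : E →L[ℂ] E) (u0 : E) (Φ : E →L[ℂ] ℂ) (α : ℂ)
    (T : E →L[ℂ] E) (hT : T = α • Φ.smulRight u0 + R)
    (lam0 : ℂ) (Rlam0 : E →L[ℂ] E)
    (hinv₁ : (lam0 • (1 : E →L[ℂ] E) - R).comp Rlam0 = 1)
    (hinv₂ : Rlam0.comp (lam0 • (1 : E →L[ℂ] E) - R) = 1)
    (hD0 : 1 - α * Φ (Rlam0 u0) = 0)
    (d : ℂ) (hd : d ≠ 0)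
    (hD' : HasDerivAt
      (fun lam : ℂ => 1 - α * Φ (Ring.inverse (lam • (1 : E →L[ℂ] E) - R) u0))
      d lam0) :
    (∀ᶠ lam in 𝓝[≠] lam0, IsUnit (lam • (1 : E →L[ℂ] E) - T)) ∧
    Tendsto (fun lam : ℂ =>
        (lam - lam0) • Ring.inverse (lam • (1 : E →L[ℂ] E) - T))
      (𝓝[≠] lam0)
      (𝓝 ((α / d) • (Φ.comp Rlam0).smulRight (Rlam0 u0))) := by
  set A : ℂ → (E →L[ℂ] E) := fun lam => lam • (1 : E →L[ℂ] E) - R with hAdef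
  have hcontA : Continuous A := by
    exact (continuous_id.smul continuous_const).sub continuous_const
  -- the unit at lam0
  let U0 : (E →L[ℂ] E)ˣ := ⟨A lam0, Rlam0, hinv₁, hinv₂⟩
  have hAu0 : IsUnit (A lam0) := ⟨U0, rfl⟩
  have hRinv0 : Ring.inverse (A lam0) = Rlam0 := by
    have := Ring.inverse_unit U0
    exact this
  -- S and D
  set S : ℂ → (E →L[ℂ] E) := fun lam => Ring.inverse (A lam) with hSdef
  set D : ℂ → ℂ := fun lam => 1 - α * Φ (S lam u0) with hDdef
  have hD0' : D lam0 = 0 := by simp [hDdef, hSdef, hRinv0, hD0]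
  -- eventually A is a unit
  have hevA : ∀ᶠ lam in 𝓝 lam0, IsUnit (A lam) :=
    hcontA.continuousAt (Units.isOpen.mem_nhds hAu0)
  -- S is continuous at lam0
  have hScont : Tendsto S (𝓝 lam0) (𝓝 Rlam0) := by
    have h := (NormedRing.inverse_continuousAt U0).tendsto.comp hcontA.continuousAt
    have e : Ring.inverse (↑U0 : E →L[ℂ] E) = Rlam0 := hRinv0
    rw [e] at h
    exact h
  -- slope facts
  have hslope : Tendsto (slope D lam0) (𝓝[≠] lam0) (𝓝 d) := by
    have := hasDerivAt_iff_tendsto_slope.mp hD'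
    exact this
  have hslope_ne : ∀ᶠ lam in 𝓝[≠] lam0, slope D lam0 lam ≠ 0 :=
    hslope.eventually_ne hd
  have hDne : ∀ᶠ lam in 𝓝[≠] lam0, D lam ≠ 0 := by
    filter_upwards [hslope_ne] with lam h hDlam
    exact h (by simp [slope_def_field, hD0', hDlam])
  have hinvslope : Tendsto (fun lam => (lam - lam0) / D lam) (𝓝[≠] lam0)
      (𝓝 d⁻¹) := by
    refine (hslope.inv₀ hd).congr' ?_
    filter_upwards [self_mem_nhdsWithin] with lam hlam
    have : slope D lam0 lam = D lam / (lam - lam0) := by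
      simp [slope_def_field, hD0']
    rw [this, div_eq_mul_inv, mul_inv_rev, inv_inv, div_eq_mul_inv, mul_comm]
  -- good set
  have hgood : ∀ᶠ lam in 𝓝[≠] lam0,
      IsUnit (A lam) ∧ D lam ≠ 0 ∧ lam ≠ lam0 :=
    (eventually_nhdsWithin_of_eventually_nhds hevA).and
      (hDne.and self_mem_nhdsWithin)
  -- Sherman-Morrison formula on the good set
  have key : ∀ lam : ℂ, IsUnit (A lam) → D lam ≠ 0 →
      IsUnit (lam • (1 : E →L[ℂ] E) - T) ∧
      Ring.inverse (lam • (1 : E →L[ℂ] E) - T)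
        = S lam + (α / D lam) • (Φ.comp (S lam)).smulRight (S lam u0) := by
    intro lam hu hDne
    have h1 : A lam * S lam = 1 := Ring.mul_inverse_cancel _ hu
    have h2 : S lam * A lam = 1 := Ring.inverse_mul_cancel _ hu
    have hc : (α / D lam) * (1 - α * Φ (S lam u0)) = α := by
      have hDlam : (1 - α * Φ (S lam u0)) = D lam := rfl
      rw [hDlam]
      exact div_mul_cancel₀ α hDne
    obtain ⟨hm1, hm2⟩ := sm_mul Φ u0 α (α / D lam) (A lam) (S lam) h1 h2 hc
    have hTeq : lam • (1 : E →L[ℂ] E) - T = A lam - α • Φ.smulRight u0 := by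
      rw [hT]
      show lam • (1 : E →L[ℂ] E) - (α • Φ.smulRight u0 + R) = (lam • (1 : E →L[ℂ] E) - R) - α • Φ.smulRight u0
      rw [sub_add_eq_sub_sub, sub_right_comm]
    let u : (E →L[ℂ] E)ˣ :=
      ⟨lam • (1 : E →L[ℂ] E) - T,
        S lam + (α / D lam) • (Φ.comp (S lam)).smulRight (S lam u0),
        by rw [hTeq]; exact hm1, by rw [hTeq]; exact hm2⟩
    refine ⟨⟨u, rfl⟩, ?_⟩
    have := Ring.inverse_unit u
    exact this
  constructor
  · filter_upwards [hgood] with lam ⟨h1, h2, _⟩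
    exact (key lam h1 h2).1
  · -- limit computation
    have hL : Tendsto (fun lam => (Φ.comp (S lam)).smulRight (S lam u0))
        (𝓝 lam0) (𝓝 ((Φ.comp Rlam0).smulRight (Rlam0 u0))) := by
      have hΦS : Tendsto (fun lam => Φ.comp (S lam)) (𝓝 lam0)
          (𝓝 (Φ.comp Rlam0)) :=
        ((ContinuousLinearMap.compL ℂ E E ℂ Φ).continuous.tendsto _).comp hScont
      have hSu0 : Tendsto (fun lam => S lam u0) (𝓝 lam0) (𝓝 (Rlam0 u0)) := by
        have hev : Continuous fun g : E →L[ℂ] E => g u0 :=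
          (ContinuousLinearMap.apply ℂ E u0).continuous
        exact (hev.tendsto _).comp hScont
      have hbil : Continuous fun p : (E →L[ℂ] ℂ) × E => p.1.smulRight p.2 := by
        have := (ContinuousLinearMap.smulRightL ℂ E E).continuous₂
        exact this
      exact (hbil.tendsto _).comp (hΦS.prodMk_nhds hSu0)
    have t1 : Tendsto (fun lam : ℂ => (lam - lam0) • S lam) (𝓝[≠] lam0)
        (𝓝 0) := by
      have : Tendsto (fun lam : ℂ => (lam - lam0) • S lam) (𝓝 lam0)
          (𝓝 ((lam0 - lam0) • Rlam0)) :=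
        (tendsto_id.sub_const lam0).smul hScont
      simpa using this.mono_left nhdsWithin_le_nhds
    have t2 : Tendsto (fun lam : ℂ =>
        (α * ((lam - lam0) / D lam)) •
          (Φ.comp (S lam)).smulRight (S lam u0)) (𝓝[≠] lam0)
        (𝓝 ((α * d⁻¹) • (Φ.comp Rlam0).smulRight (Rlam0 u0))) :=
      ((tendsto_const_nhds.mul hinvslope)).smul
        (hL.mono_left nhdsWithin_le_nhds)
    have hsum := t1.add t2
    rw [zero_add] at hsum
    have hlim : (α / d) • (Φ.comp Rlam0).smulRight (Rlam0 u0)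
        = (α * d⁻¹) • (Φ.comp Rlam0).smulRight (Rlam0 u0) := by
      rw [div_eq_mul_inv]
    rw [hlim]
    refine hsum.congr' ?_
    filter_upwards [hgood] with lam ⟨h1, h2, hne⟩
    rw [(key lam h1 h2).2, smul_add, smul_smul]
    congr 2
    ring
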